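/- Let n ≥ 1, λ a partition of length at most 2n, and T ∈ SST_{2n}(λ). If T is not symplectic, then there exists a unique i ∈ [2,2n] such that T(i,1) < 2i−1 and T(k,1) ≥ 2k−1 for all k ∈ [1,i−1]; moreover, for this i one has T(i,1) = 2i−2 and T(i−1,1) = 2i−3. -/

import Mathlib

/-- `part lam i` : the `i`-th part (1-indexed) of the partition `lam`,
with `lam_i = 0` for `i > ℓ(lam)`. -/
def part (lam : List ℕ) (i : ℕ) : ℕ := lam.getD (i - 1) 0

/-- A partition: a weakly decreasing finite sequence of positive integers. -/
def IsPartition (lam : List ℕ) : Prop :=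
  lam.Pairwise (· ≥ ·) ∧ ∀ x ∈ lam, 0 < x

/-- `(i, j)` is a cell of the Young diagram `D(lam)`. -/
def IsCell (lam : List ℕ) (i j : ℕ) : Prop :=
  1 ≤ i ∧ i ≤ lam.length ∧ 1 ≤ j ∧ j ≤ part lam i

/-- `T` is a semistandard Young tableau of shape `lam` with entries in `[1, m]`:
rows weakly increase from left to right, columns strictly increase from
top to bottom. -/
def IsSSYT (m : ℕ) (lam : List ℕ) (T : ℕ → ℕ → ℕ) : Prop :=
  (∀ i j, IsCell lam i j → 1 ≤ T i j ∧ T i j ≤ m) ∧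
  (∀ i j, IsCell lam i j → IsCell lam i (j + 1) → T i j ≤ T i (j + 1)) ∧
  (∀ i j, IsCell lam i j → IsCell lam (i + 1) j → T i j < T (i + 1) j)

theorem stmt3 (n : ℕ) (hn : 1 ≤ n) (lam : List ℕ)
    (hlam : IsPartition lam) (hlen : lam.length ≤ 2 * n)
    (T : ℕ → ℕ → ℕ) (hT : IsSSYT (2 * n) lam T)
    (hns : ¬ ∀ k, 1 ≤ k → k ≤ lam.length → 2 * k - 1 ≤ T k 1) :
    ∃ i,
      (2 ≤ i ∧ i ≤ 2 * n ∧ i ≤ lam.length ∧ T i 1 < 2 * i - 1 ∧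
        ∀ k, 1 ≤ k → k ≤ i - 1 → 2 * k - 1 ≤ T k 1) ∧
      (∀ i', (2 ≤ i' ∧ i' ≤ 2 * n ∧ i' ≤ lam.length ∧ T i' 1 < 2 * i' - 1 ∧
        ∀ k, 1 ≤ k → k ≤ i' - 1 → 2 * k - 1 ≤ T k 1) → i' = i) ∧
      T i 1 = 2 * i - 2 ∧ T (i - 1) 1 = 2 * i - 3 := by
  classical
  -- first column cells
  have hcell : ∀ k, 1 ≤ k → k ≤ lam.length → IsCell lam k 1 := by
    intro k hk1 hkl
    refine ⟨hk1, hkl, le_refl 1, ?_⟩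
    have hlt : k - 1 < lam.length := by omega
    have : part lam k = lam.get ⟨k - 1, hlt⟩ := by
      simp [part, List.getD_eq_getElem?_getD, List.getElem?_eq_getElem hlt]
    rw [this]
    exact hlam.2 _ (lam.get_mem ⟨k-1, hlt⟩)
  push_neg at hns
  have hex : ∃ k, 1 ≤ k ∧ k ≤ lam.length ∧ T k 1 < 2 * k - 1 := by
    obtain ⟨k, h1, h2, h3⟩ := hns
    exact ⟨k, h1, h2, by omega⟩
  set P : ℕ → Prop := fun k => 1 ≤ k ∧ k ≤ lam.length ∧ T k 1 < 2 * k - 1 with hP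
  have hexP : ∃ k, P k := hex
  set i := Nat.find hexP with hi
  obtain ⟨hi1, hil, hiT⟩ := Nat.find_spec hexP
  rw [← hi] at hi1 hil hiT
  have hmin : ∀ k, 1 ≤ k → k < i → 2 * k - 1 ≤ T k 1 := by
    intro k hk1 hk2
    have := Nat.find_min hexP hk2
    simp only [hP, not_and, not_lt] at this
    exact this hk1 (by omega)
  -- i ≥ 2
  have hT11 : 1 ≤ T 1 1 := (hT.1 1 1 (hcell 1 le_rfl (by omega))).1
  have hi2 : 2 ≤ i := by
    by_contra h
    have : i = 1 := by omega
    rw [this] at hiT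
    omega
  -- predecessor
  have hprev : 2 * (i - 1) - 1 ≤ T (i - 1) 1 := hmin (i - 1) (by omega) (by omega)
  have hcol : T (i - 1) 1 < T i 1 := by
    have := hT.2.2 (i - 1) 1 (hcell (i - 1) (by omega) (by omega))
    have heq : i - 1 + 1 = i := by omega
    rw [heq] at this
    exact this (hcell i hi1 hil)
  have hTi : T i 1 = 2 * i - 2 := by omega
  have hTi1 : T (i - 1) 1 = 2 * i - 3 := by omega
  refine ⟨i, ⟨hi2, by omega, hil, hiT, ?_⟩, ?_, hTi, hTi1⟩
  · intro k hk1 hk2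
    exact hmin k hk1 (by omega)
  · intro i' ⟨h1, h2, h3, h4, h5⟩
    have hle : i ≤ i' := Nat.find_min' hexP ⟨by omega, h3, h4⟩
    rcases eq_or_lt_of_le hle with h | h
    · omega
    · exact absurd (h5 i hi1 (by omega)) (by omega)
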